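/- Let X ⊆ ℝ² be a set such that for every m ≥ 1 there exists a cover of X by b_m squares of side length l_m, where b_m = ∏_{i=1}^m (4k^i - 4) and l_m = ∏_{i=1}^m k^{-i} for some fixed integer k ≥ 3. Then the Hausdorff dimension of X is at most 1. -/

import Mathlib

open Finset MeasureTheory
open Filter ENNReal

/-- if X ⊆ ℝ² can be covered, for every m ≥ 1, by
b_m = ∏_{i=1}^m (4k^i - 4) sets of diameter at most √2 · l_m, where
l_m = ∏_{i=1}^m k^{-i} and k ≥ 3, then dim_H X ≤ 1. -/
theorem carpet_cover_dimH_le_one (k : ℕ) (hk : 3 ≤ k) (X : Set (ℝ × ℝ))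
    (b : ℕ → ℕ) (l : ℕ → ℝ)
    (hb : ∀ m, b m = ∏ i ∈ Finset.Icc 1 m, (4 * k ^ i - 4))
    (hl : ∀ m, l m = ∏ i ∈ Finset.Icc 1 m, ((k : ℝ) ^ i)⁻¹)
    (hcov : ∀ m, 1 ≤ m → ∃ c : Fin (b m) → Set (ℝ × ℝ),
      X ⊆ ⋃ i, c i ∧
      ∀ i, EMetric.diam (c i) ≤ ENNReal.ofReal (Real.sqrt 2 * l m)) :
    dimH X ≤ 1 := by
  set S : ℕ → ℕ := fun m => ∑ i ∈ Finset.Icc 1 m, i with hSdef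
  have hk0 : (0:ℝ) < (k:ℝ) := by
    have : (3:ℝ) ≤ (k:ℝ) := by exact_mod_cast hk
    linarith
  have hki : (0:ℝ) < (k:ℝ)⁻¹ := by positivity
  have hki1 : (k:ℝ)⁻¹ < 1 := by
    rw [inv_lt_one_iff₀]; right
    exact_mod_cast lt_of_lt_of_le (by norm_num) hk
  -- Gauss sum
  have hS2 : ∀ m, S m * 2 = m * (m + 1) := by
    intro m
    induction m with
    | zero => simp [hSdef]
    | succ n ih =>
      have : S (n+1) = S n + (n+1) := by
        simp only [hSdef]
        rw [Finset.sum_Icc_succ_top (by omega)]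
      rw [this]; nlinarith [ih]
  have hSm : ∀ m, m ≤ S m := by
    intro m
    have := Finset.card_nsmul_le_sum (Finset.Icc 1 m) id 1
      (fun x hx => (Finset.mem_Icc.mp hx).1)
    simpa [hSdef, Nat.card_Icc] using this
  -- l m = (k⁻¹) ^ S m
  have hl' : ∀ m, l m = ((k:ℝ)⁻¹) ^ (S m) := by
    intro m
    rw [hl]
    simp only [← inv_pow, hSdef]
    exact Finset.prod_pow_eq_pow_sum _ _ _
  have hl0 : ∀ m, 0 ≤ l m := fun m => by rw [hl']; positivity
  -- b m ≤ 4^m * k^(S m)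
  have hb' : ∀ m, (b m : ℝ) ≤ 4 ^ m * (k:ℝ) ^ (S m) := by
    intro m
    have h1 : b m ≤ 4 ^ m * k ^ (S m) := by
      rw [hb]
      calc ∏ i ∈ Finset.Icc 1 m, (4 * k ^ i - 4)
          ≤ ∏ i ∈ Finset.Icc 1 m, 4 * k ^ i :=
            Finset.prod_le_prod' (fun i _ => Nat.sub_le _ _)
        _ = 4 ^ m * k ^ (S m) := by
            rw [Finset.prod_mul_distrib, Finset.prod_const, Nat.card_Icc,
              Finset.prod_pow_eq_pow_sum]
            simp [hSdef]
    exact_mod_cast h1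
  -- the tendsto of l to 0
  have hlt : Tendsto l atTop (nhds 0) := by
    apply squeeze_zero hl0 (g := fun m => ((k:ℝ)⁻¹) ^ m)
    · intro m
      rw [hl']
      exact pow_le_pow_of_le_one hki.le hki1.le (hSm m)
    · exact tendsto_pow_atTop_nhds_zero_of_lt_one hki.le hki1
  -- chosen covers
  have hT : ∀ m, ∃ c : Fin (b m) → Set (ℝ × ℝ), 1 ≤ m →
      (X ⊆ ⋃ i, c i ∧
        ∀ i, EMetric.diam (c i) ≤ ENNReal.ofReal (Real.sqrt 2 * l m)) := by
    intro m
    by_cases h : 1 ≤ m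
    · exact ⟨(hcov m h).choose, fun _ => (hcov m h).choose_spec⟩
    · exact ⟨fun _ => ∅, fun h' => absurd h' h⟩
  choose t ht using hT
  -- reduce to: for d > 1, μH[d] X = 0
  refine dimH_le fun d hd => ?_
  by_contra hd1
  push_neg at hd1
  have hd1' : (1:ℝ) < (d:ℝ) := by exact_mod_cast hd1
  set D : ℝ := (d : ℝ) with hD
  have hD0 : (0:ℝ) ≤ D := by linarith
  set r : ℕ → ℝ≥0∞ := fun m => ENNReal.ofReal (Real.sqrt 2 * l m) with hrdef
  have hr : Tendsto r atTop (nhds 0) := by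
    have h1 : Tendsto (fun m => Real.sqrt 2 * l m) atTop (nhds (Real.sqrt 2 * 0)) :=
      hlt.const_mul _
    rw [mul_zero] at h1
    simpa [hrdef] using ENNReal.tendsto_ofReal h1
  have key : μH[D] X ≤ liminf (fun m => ∑ i, EMetric.diam (t m i) ^ D) atTop := by
    apply Measure.hausdorffMeasure_le_liminf_sum D X r hr t
    · exact eventually_atTop.mpr ⟨1, fun m hm => (ht m hm).2⟩
    · exact eventually_atTop.mpr ⟨1, fun m hm => (ht m hm).1⟩
  -- the real sequence
  set g : ℕ → ℝ := fun m => (b m : ℝ) * (Real.sqrt 2 * l m) ^ D with hgdef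
  have hbound : ∀ᶠ m in atTop,
      (∑ i, EMetric.diam (t m i) ^ D) ≤ ENNReal.ofReal (g m) := by
    refine eventually_atTop.mpr ⟨1, fun m hm => ?_⟩
    calc (∑ i, EMetric.diam (t m i) ^ D)
        ≤ ∑ _i : Fin (b m), (r m) ^ D :=
          Finset.sum_le_sum fun i _ => ENNReal.rpow_le_rpow ((ht m hm).2 i) hD0
      _ = (b m : ℝ≥0∞) * (r m) ^ D := by
          simp [Finset.sum_const, Finset.card_univ, nsmul_eq_mul]
      _ = ENNReal.ofReal (g m) := by
          simp only [hrdef, hgdef]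
          rw [ENNReal.ofReal_mul (Nat.cast_nonneg _), ENNReal.ofReal_natCast,
            ENNReal.ofReal_rpow_of_nonneg
              (mul_nonneg (Real.sqrt_nonneg 2) (hl0 m)) hD0]
  -- main analytic estimate
  have hg : Tendsto g atTop (nhds 0) := by
    set ρ : ℝ := ((k:ℝ)⁻¹) ^ (D - 1) with hρdef
    have hρ0 : 0 < ρ := Real.rpow_pos_of_pos hki _
    have hρ1 : ρ < 1 := Real.rpow_lt_one hki.le hki1 (by linarith)
    obtain ⟨c, hc⟩ := exists_pow_lt_of_lt_one (show (0:ℝ) < 4⁻¹ by norm_num) hρ1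
    set q : ℝ := 4 * ρ ^ c with hqdef
    have hq0 : 0 ≤ q := by positivity
    have hq1 : q < 1 := by
      have : (4:ℝ) * ρ ^ c < 4 * 4⁻¹ := by
        apply mul_lt_mul_of_pos_left hc (by norm_num)
      simpa [hqdef] using this.trans_le (by norm_num)
    set C : ℝ := Real.sqrt 2 ^ D with hCdef
    have hC0 : 0 ≤ C := Real.rpow_nonneg (Real.sqrt_nonneg 2) _
    have hkey : ∀ m, 2 * c ≤ m + 1 → g m ≤ C * q ^ m := by
      intro m hm
      have hcm : c * m ≤ S m := by
        have h1 : c * m * 2 ≤ S m * 2 := by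
          rw [hS2]
          calc c * m * 2 = m * (2 * c) := by ring
            _ ≤ m * (m + 1) := Nat.mul_le_mul_left _ hm
        omega
      have hlD : (l m) ^ D = (((k:ℝ)⁻¹) ^ D) ^ (S m) := by
        rw [hl', ← Real.rpow_natCast ((k:ℝ)⁻¹) (S m), ← Real.rpow_mul hki.le,
          mul_comm, Real.rpow_mul hki.le, Real.rpow_natCast]
      have hmix : (k:ℝ) * ((k:ℝ)⁻¹) ^ D = ρ := by
        rw [hρdef, Real.rpow_sub hki, Real.rpow_one, div_eq_mul_inv, inv_inv, mul_comm]
      calc g m = (b m : ℝ) * (Real.sqrt 2 ^ D * (l m) ^ D) := by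
            simp only [hgdef]
            rw [Real.mul_rpow (Real.sqrt_nonneg 2) (hl0 m)]
        _ = C * ((b m : ℝ) * (((k:ℝ)⁻¹) ^ D) ^ (S m)) := by
            rw [hlD, hCdef]; ring
        _ ≤ C * ((4 ^ m * (k:ℝ) ^ (S m)) * (((k:ℝ)⁻¹) ^ D) ^ (S m)) := by
            apply mul_le_mul_of_nonneg_left _ hC0
            apply mul_le_mul_of_nonneg_right (hb' m)
            positivity
        _ = C * (4 ^ m * ρ ^ (S m)) := by
            rw [mul_assoc, ← mul_pow, hmix]
        _ ≤ C * (4 ^ m * (ρ ^ c) ^ m) := by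
            apply mul_le_mul_of_nonneg_left _ hC0
            apply mul_le_mul_of_nonneg_left _ (by positivity)
            rw [← pow_mul]
            exact pow_le_pow_of_le_one hρ0.le hρ1.le (by rw [mul_comm] at hcm ⊢; exact hcm)
        _ = C * q ^ m := by rw [hqdef, mul_pow]
    have hgeo : Tendsto (fun m => C * q ^ m) atTop (nhds 0) := by
      have := (tendsto_pow_atTop_nhds_zero_of_lt_one hq0 hq1).const_mul C
      simpa using this
    apply squeeze_zero' (Eventually.of_forall fun m => by
      simp only [hgdef]
      exact mul_nonneg (Nat.cast_nonneg _)
        (Real.rpow_nonneg (mul_nonneg (Real.sqrt_nonneg 2) (hl0 m)) _))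
      (eventually_atTop.mpr ⟨2 * c, fun m hm => hkey m (by omega)⟩) hgeo
  -- conclude
  have hlim : liminf (fun m => ∑ i, EMetric.diam (t m i) ^ D) atTop = 0 := by
    apply le_antisymm _ zero_le
    calc liminf (fun m => ∑ i, EMetric.diam (t m i) ^ D) atTop
        ≤ liminf (fun m => ENNReal.ofReal (g m)) atTop := liminf_le_liminf hbound
      _ = 0 := by
          have := (ENNReal.tendsto_ofReal hg).liminf_eq
          simpa using this
  rw [hlim] at key
  rw [le_zero_iff.mp key] at hd
  exact (ENNReal.zero_ne_top hd).elim
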